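/- For every integer N ≥ 2 and every x in the support [0, N/(N+1)] of f_*, the indifference equation (1-x) · U_*(x)^{N-1} + (x/N) · V_*^{N-1} = 1/N holds, i.e. the expected winning probability of a player choosing any x in the support, against N-1 opponents playing f_*, equals 1/N. -/

import Mathlib

open Real MeasureTheory

/-- The Nash-equilibrium density of the `N`-player elimination game. -/
noncomputable def fstar (N : ℕ) (x : ℝ) : ℝ :=
  if x ≤ (N:ℝ)/((N:ℝ)+1) then
    (N:ℝ) ^ (-(2:ℝ)/((N:ℝ)-1)) /
      ((1-x) ^ ((3:ℝ) - ((N:ℝ)-2)/((N:ℝ)-1)) * ((N:ℝ)-x) ^ (((N:ℝ)-2)/((N:ℝ)-1)))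
  else 0

/-- `U_*(x) = ∫_0^x (1-s) f_*(s) ds + ∫_0^1 s f_*(s) ds`. -/
noncomputable def Ustar (N : ℕ) (x : ℝ) : ℝ :=
  (∫ s in (0:ℝ)..x, (1-s) * fstar N s) + ∫ s in (0:ℝ)..1, s * fstar N s

/-- `V_* = ∫_0^1 s f_*(s) ds`. -/
noncomputable def Vstar (N : ℕ) : ℝ := ∫ s in (0:ℝ)..1, s * fstar N s

lemma hasDeriv_h (n c : ℝ) (s : ℝ) (h1 : s < 1) (hn : s < n) :
    HasDerivAt (fun t => (n - t) ^ c * (1 - t) ^ (-c))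
      (c * (n - 1) * ((n - s) ^ (c - 1) * (1 - s) ^ (-c - 1))) s := by
  have h1' : (0:ℝ) < 1 - s := by linarith
  have hn' : (0:ℝ) < n - s := by linarith
  have d1 : HasDerivAt (fun t : ℝ => (n - t) ^ c) ((-1) * c * (n - s) ^ (c - 1)) s :=
    ((hasDerivAt_id s).const_sub n).rpow_const (Or.inl hn'.ne')
  have d2 : HasDerivAt (fun t : ℝ => (1 - t) ^ (-c)) ((-1) * (-c) * (1 - s) ^ (-c - 1)) s :=
    ((hasDerivAt_id s).const_sub 1).rpow_const (Or.inl h1'.ne')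
  have := d1.mul d2
  refine this.congr_deriv ?_
  have e1 : (1 - s) ^ (-c) = (1 - s) ^ (-c - 1) * (1 - s) := by
    rw [← Real.rpow_add_one h1'.ne' (-c - 1)]
    norm_num
  have e2 : (n - s) ^ c = (n - s) ^ (c - 1) * (n - s) := by
    rw [← Real.rpow_add_one hn'.ne' (c - 1)]
    norm_num
  rw [e1, e2]; ring

lemma hasDeriv_G (n c : ℝ) (hc : c * (n - 1) = 1) (s : ℝ) (h1 : s < 1) (hn : s < n) :
    HasDerivAt (fun t => (n - t) ^ c * (1 - t) ^ (-c - 1) * t)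
      (n * ((n - s) ^ (c - 1) * (1 - s) ^ (-c - 2))) s := by
  have h1' : (0:ℝ) < 1 - s := by linarith
  have hn' : (0:ℝ) < n - s := by linarith
  have d1 : HasDerivAt (fun t : ℝ => (n - t) ^ c) ((-1) * c * (n - s) ^ (c - 1)) s :=
    ((hasDerivAt_id s).const_sub n).rpow_const (Or.inl hn'.ne')
  have d2 : HasDerivAt (fun t : ℝ => (1 - t) ^ (-c - 1)) ((-1) * (-c - 1) * (1 - s) ^ (-c - 2)) s := by
    have h := ((hasDerivAt_id s).const_sub 1).rpow_const (p := -c - 1) (Or.inl h1'.ne')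
    rw [show -c - 1 - 1 = -c - 2 from by ring] at h
    exact h
  have := (d1.mul d2).mul (hasDerivAt_id s)
  refine (this.congr_deriv ?_)
  symm
  simp only [Pi.mul_apply]
  have e1 : (1 - s) ^ (-c - 1) = (1 - s) ^ (-c - 2) * (1 - s) := by
    rw [← Real.rpow_add_one h1'.ne' (-c - 2)]
    congr 1; ring
  have e2 : (n - s) ^ c = (n - s) ^ (c - 1) * (n - s) := by
    rw [← Real.rpow_add_one hn'.ne' (c - 1)]
    norm_num
  rw [e1, e2]
  simp only [id_eq]
  linear_combination (-(s * ((n - s) ^ (c - 1) * (1 - s) ^ (-c - 2)))) * hc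

lemma fstar_eq (N : ℕ) (hN : 2 ≤ N) (s : ℝ) (hs1 : s < 1)
    (ha : s ≤ (N:ℝ)/((N:ℝ)+1)) :
    fstar N s = (N:ℝ) ^ (-(2:ℝ)/((N:ℝ)-1)) *
      (((N:ℝ) - s) ^ ((1/((N:ℝ)-1)) - 1) * (1 - s) ^ (-(1/((N:ℝ)-1)) - 2)) := by
  have hn2 : (2:ℝ) ≤ (N:ℝ) := by exact_mod_cast hN
  have h1 : (0:ℝ) < 1 - s := by linarith
  have h2 : (0:ℝ) < (N:ℝ) - s := by linarith
  have hne : ((N:ℝ)-1) ≠ 0 := by linarith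
  have eb : (1/((N:ℝ)-1)) - 1 = -(((N:ℝ)-2)/((N:ℝ)-1)) := by
    field_simp
    ring
  have eb2 : -(1/((N:ℝ)-1)) - 2 = -((3:ℝ) - ((N:ℝ)-2)/((N:ℝ)-1)) := by
    field_simp
    ring
  simp only [fstar, if_pos ha, eb, eb2]
  rw [Real.rpow_neg h2.le, Real.rpow_neg h1.le, div_eq_mul_inv, mul_inv]
  ring

lemma II (N : ℕ) (hN : 2 ≤ N) (u v : ℝ) (huv : u ≤ v)
    (hva : v ≤ (N:ℝ)/((N:ℝ)+1)) (φ : ℝ → ℝ) (hφ : Continuous φ) :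
    IntervalIntegrable (fun s => φ s * fstar N s) volume u v := by
  have hn2 : (2:ℝ) ≤ (N:ℝ) := by exact_mod_cast hN
  have ha1 : (N:ℝ)/((N:ℝ)+1) < 1 := by
    rw [div_lt_one (by linarith)]; linarith
  have cont : ContinuousOn
      (fun s : ℝ => φ s * ((N:ℝ) ^ (-(2:ℝ)/((N:ℝ)-1)) *
        (((N:ℝ) - s) ^ ((1/((N:ℝ)-1)) - 1) * (1 - s) ^ (-(1/((N:ℝ)-1)) - 2))))
      (Set.uIcc u v) := by
    apply hφ.continuousOn.mul
    apply continuousOn_const.mul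
    apply ContinuousOn.mul
    · apply ContinuousOn.rpow_const (continuous_const.sub continuous_id).continuousOn
      intro s hs
      rw [Set.uIcc_of_le huv] at hs
      have : s < 1 := lt_of_le_of_lt (hs.2.trans hva) ha1
      exact Or.inl (by intro h; simp only [Pi.sub_apply, id_eq] at h; linarith)
    · apply ContinuousOn.rpow_const (continuous_const.sub continuous_id).continuousOn
      intro s hs
      rw [Set.uIcc_of_le huv] at hs
      have : s < 1 := lt_of_le_of_lt (hs.2.trans hva) ha1
      exact Or.inl (by intro h; simp only [Pi.sub_apply, id_eq] at h; linarith)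
  refine (cont.intervalIntegrable).congr ?_
  intro s hs; beta_reduce
  rw [Set.uIoc_of_le huv] at hs
  have hs1 : s < 1 := lt_of_le_of_lt (hs.2.trans hva) ha1
  rw [fstar_eq N hN s hs1 (hs.2.trans hva)]

lemma contInt (n y p q K : ℝ) (hy0 : 0 ≤ y) (h1 : y < 1) (hn : y < n) :
    IntervalIntegrable (fun s => K * ((n - s) ^ p * (1 - s) ^ q)) volume 0 y := by
  apply ContinuousOn.intervalIntegrable
  apply continuousOn_const.mul
  have hmem : ∀ s ∈ Set.uIcc (0:ℝ) y, s ≤ y := by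
    intro s hs; rw [Set.uIcc_of_le hy0] at hs; exact hs.2
  apply ContinuousOn.mul <;>
  · apply ContinuousOn.rpow_const (continuous_const.sub continuous_id).continuousOn
    intro s hs
    have := hmem s hs
    exact Or.inl (by intro h; simp only [Pi.sub_apply, id_eq] at h; linarith)


/-- the indifference equation: for `N ≥ 2` and every `x` in the
support `[0, N/(N+1)]` of `f_*`, the expected winning probability
`(1-x) U_*(x)^{N-1} + (x/N) V_*^{N-1}` equals `1/N`. -/
theorem indifference_on_support (N : ℕ) (hN : 2 ≤ N)
    (x : ℝ) (hx : x ∈ Set.Icc (0:ℝ) ((N:ℝ)/((N:ℝ)+1))) :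
    (1-x) * (Ustar N x) ^ (N-1) + (x/(N:ℝ)) * (Vstar N) ^ (N-1) = 1/(N:ℝ) := by
  obtain ⟨hx0, hxa⟩ := hx
  have hn2 : (2:ℝ) ≤ (N:ℝ) := by exact_mod_cast hN
  have hn0 : (0:ℝ) < (N:ℝ) := by linarith
  have hn1 : (0:ℝ) < (N:ℝ) - 1 := by linarith
  have hne : ((N:ℝ) - 1) ≠ 0 := hn1.ne'
  have hc : (1/((N:ℝ)-1)) * ((N:ℝ) - 1) = 1 := by field_simp
  have ha0 : (0:ℝ) ≤ (N:ℝ)/((N:ℝ)+1) := by positivity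
  have ha1 : (N:ℝ)/((N:ℝ)+1) < 1 := by
    rw [div_lt_one (by linarith)]; linarith
  have han : (N:ℝ)/((N:ℝ)+1) < (N:ℝ) := by linarith
  -- key1 : the integral of (1-s) f on [0,y]
  have key1 : ∀ y : ℝ, 0 ≤ y → y ≤ (N:ℝ)/((N:ℝ)+1) →
      ∫ s in (0:ℝ)..y, (1-s) * fstar N s =
        (N:ℝ) ^ (-(2:ℝ)/((N:ℝ)-1)) * (((N:ℝ) - y) ^ (1/((N:ℝ)-1)) * (1 - y) ^ (-(1/((N:ℝ)-1))))
          - (N:ℝ) ^ (-(2:ℝ)/((N:ℝ)-1)) * (N:ℝ) ^ (1/((N:ℝ)-1)) := by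
    intro y hy0 hya
    have hy1 : y < 1 := lt_of_le_of_lt hya ha1
    have hyn : y < (N:ℝ) := by linarith
    have hEq : Set.EqOn (fun s => (1-s) * fstar N s)
        (fun s => (N:ℝ) ^ (-(2:ℝ)/((N:ℝ)-1)) *
          (((N:ℝ) - s) ^ ((1/((N:ℝ)-1)) - 1) * (1 - s) ^ (-(1/((N:ℝ)-1)) - 1)))
        (Set.uIcc 0 y) := by
      intro s hs
      rw [Set.uIcc_of_le hy0] at hs
      have hs1 : s < 1 := lt_of_le_of_lt hs.2 hy1
      have h1s : (0:ℝ) < 1 - s := by linarith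
      simp only
      rw [fstar_eq N hN s hs1 (hs.2.trans hya)]
      have e : (1 - s) ^ (-(1/((N:ℝ)-1)) - 1) = (1 - s) ^ (-(1/((N:ℝ)-1)) - 2) * (1 - s) := by
        rw [← Real.rpow_add_one h1s.ne' (-(1/((N:ℝ)-1)) - 2)]
        congr 1; ring
      rw [e]; ring
    rw [intervalIntegral.integral_congr hEq]
    rw [intervalIntegral.integral_eq_sub_of_hasDerivAt
      (f := fun t => (N:ℝ) ^ (-(2:ℝ)/((N:ℝ)-1)) *
        (((N:ℝ) - t) ^ (1/((N:ℝ)-1)) * (1 - t) ^ (-(1/((N:ℝ)-1)))))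
      (fun s hs => by
        rw [Set.uIcc_of_le hy0] at hs
        have hs1 : s < 1 := lt_of_le_of_lt hs.2 hy1
        have hsn : s < (N:ℝ) := by linarith
        have h := (hasDeriv_h (N:ℝ) (1/((N:ℝ)-1)) s hs1 hsn).const_mul
          ((N:ℝ) ^ (-(2:ℝ)/((N:ℝ)-1)))
        rw [hc] at h
        simpa using h)
      (contInt (N:ℝ) y _ _ _ hy0 hy1 hyn)]
    norm_num
  -- key2 : the full integral of s * f over [0,1]
  have hsint : ∫ s in (0:ℝ)..1, s * fstar N s =
      ∫ s in (0:ℝ)..((N:ℝ)/((N:ℝ)+1)), s * fstar N s := by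
    have I1 : IntervalIntegrable (fun s => s * fstar N s) volume 0 ((N:ℝ)/((N:ℝ)+1)) :=
      II N hN 0 _ ha0 le_rfl (fun s => s) continuous_id
    have I2 : IntervalIntegrable (fun s => s * fstar N s) volume ((N:ℝ)/((N:ℝ)+1)) 1 := by
      refine (intervalIntegrable_const (c := (0:ℝ))).congr ?_
      intro s hs
      rw [Set.uIoc_of_le ha1.le] at hs
      simp only [fstar, if_neg (not_le.mpr hs.1), mul_zero]
    have hzero : ∫ s in ((N:ℝ)/((N:ℝ)+1))..1, s * fstar N s = 0 := by
      have : ∫ s in ((N:ℝ)/((N:ℝ)+1))..1, s * fstar N s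
          = ∫ s in ((N:ℝ)/((N:ℝ)+1))..1, (0:ℝ) := by
        apply intervalIntegral.integral_congr_ae
        filter_upwards with s hs
        rw [Set.uIoc_of_le ha1.le] at hs
        simp only [fstar, if_neg (not_le.mpr hs.1), mul_zero]
      simpa using this
    rw [← intervalIntegral.integral_add_adjacent_intervals I1 I2, hzero, add_zero]
  have key2 : ∫ s in (0:ℝ)..1, s * fstar N s = (N:ℝ) ^ (-(1/((N:ℝ)-1))) := by
    rw [hsint]
    have hEq : Set.EqOn (fun s => s * fstar N s)
        (fun s => (N:ℝ) ^ (-(2:ℝ)/((N:ℝ)-1)) * (((N:ℝ) - s) ^ ((1/((N:ℝ)-1)) - 1) * (1 - s) ^ (-(1/((N:ℝ)-1)) - 2))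
          - (N:ℝ) ^ (-(2:ℝ)/((N:ℝ)-1)) * (((N:ℝ) - s) ^ ((1/((N:ℝ)-1)) - 1) * (1 - s) ^ (-(1/((N:ℝ)-1)) - 1)))
        (Set.uIcc 0 ((N:ℝ)/((N:ℝ)+1))) := by
      intro s hs
      rw [Set.uIcc_of_le ha0] at hs
      have hs1 : s < 1 := lt_of_le_of_lt hs.2 ha1
      have h1s : (0:ℝ) < 1 - s := by linarith
      simp only
      rw [fstar_eq N hN s hs1 hs.2]
      have e : (1 - s) ^ (-(1/((N:ℝ)-1)) - 1) = (1 - s) ^ (-(1/((N:ℝ)-1)) - 2) * (1 - s) := by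
        rw [← Real.rpow_add_one h1s.ne' (-(1/((N:ℝ)-1)) - 2)]
        congr 1; ring
      rw [e]; ring
    rw [intervalIntegral.integral_congr hEq]
    rw [intervalIntegral.integral_eq_sub_of_hasDerivAt
      (f := fun t => ((N:ℝ) ^ (-(2:ℝ)/((N:ℝ)-1)) / (N:ℝ)) *
          (((N:ℝ) - t) ^ (1/((N:ℝ)-1)) * (1 - t) ^ (-(1/((N:ℝ)-1)) - 1) * t)
        - (N:ℝ) ^ (-(2:ℝ)/((N:ℝ)-1)) *
          (((N:ℝ) - t) ^ (1/((N:ℝ)-1)) * (1 - t) ^ (-(1/((N:ℝ)-1)))))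
      (fun s hs => by
        rw [Set.uIcc_of_le ha0] at hs
        have hs1 : s < 1 := lt_of_le_of_lt hs.2 ha1
        have hsn : s < (N:ℝ) := by linarith
        have hG := (hasDeriv_G (N:ℝ) (1/((N:ℝ)-1)) hc s hs1 hsn).const_mul
          ((N:ℝ) ^ (-(2:ℝ)/((N:ℝ)-1)) / (N:ℝ))
        have hH := (hasDeriv_h (N:ℝ) (1/((N:ℝ)-1)) s hs1 hsn).const_mul
          ((N:ℝ) ^ (-(2:ℝ)/((N:ℝ)-1)))
        rw [hc] at hH
        have := hG.sub hH
        refine this.congr_deriv ?_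
        field_simp)
      ?_]
    · -- evaluate endpoints
      norm_num
      have h1a : (0:ℝ) < 1 - (N:ℝ)/((N:ℝ)+1) := by linarith
      have hnaa : (0:ℝ) < (N:ℝ) - (N:ℝ)/((N:ℝ)+1) := by linarith
      have hq : ((N:ℝ) - (N:ℝ)/((N:ℝ)+1)) / (1 - (N:ℝ)/((N:ℝ)+1)) = (N:ℝ)^(2:ℕ) := by
        rw [div_eq_iff h1a.ne']
        field_simp
        ring
      have hra : ((N:ℝ) - (N:ℝ)/((N:ℝ)+1)) ^ ((N:ℝ)-1)⁻¹ * (1 - (N:ℝ)/((N:ℝ)+1)) ^ (-((N:ℝ)-1)⁻¹)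
          = (N:ℝ) ^ (2*((N:ℝ)-1)⁻¹) := by
        rw [Real.rpow_neg h1a.le, ← div_eq_mul_inv, ← Real.div_rpow hnaa.le h1a.le, hq,
          ← Real.rpow_natCast (N:ℝ) 2, ← Real.rpow_mul hn0.le]
        norm_num
      have he3 : (1 - (N:ℝ)/((N:ℝ)+1)) ^ (-((N:ℝ)-1)⁻¹ - 1)
          = (1 - (N:ℝ)/((N:ℝ)+1)) ^ (-((N:ℝ)-1)⁻¹) * (1 - (N:ℝ)/((N:ℝ)+1))⁻¹ := by
        rw [show -((N:ℝ)-1)⁻¹ - 1 = -((N:ℝ)-1)⁻¹ + (-1) from by ring, Real.rpow_add h1a,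
          Real.rpow_neg_one]
      have he4 : (1 - (N:ℝ)/((N:ℝ)+1))⁻¹ * ((N:ℝ)/((N:ℝ)+1)) = (N:ℝ) := by
        rw [inv_mul_eq_div, div_eq_iff h1a.ne']
        field_simp
        ring
      have hCc : (N:ℝ)^(-2/((N:ℝ)-1)) * (N:ℝ)^((N:ℝ)-1)⁻¹ = (N:ℝ)^(-((N:ℝ)-1)⁻¹) := by
        rw [← Real.rpow_add hn0]
        congr 1
        field_simp
        ring
      rw [he3]
      have t1 : ((N:ℝ) - (N:ℝ)/((N:ℝ)+1)) ^ ((N:ℝ)-1)⁻¹ *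
            ((1 - (N:ℝ)/((N:ℝ)+1)) ^ (-((N:ℝ)-1)⁻¹) * (1 - (N:ℝ)/((N:ℝ)+1))⁻¹) *
            ((N:ℝ)/((N:ℝ)+1)) = (N:ℝ)^(2*((N:ℝ)-1)⁻¹) * (N:ℝ) := by
        calc ((N:ℝ) - (N:ℝ)/((N:ℝ)+1)) ^ ((N:ℝ)-1)⁻¹ *
              ((1 - (N:ℝ)/((N:ℝ)+1)) ^ (-((N:ℝ)-1)⁻¹) * (1 - (N:ℝ)/((N:ℝ)+1))⁻¹) *
              ((N:ℝ)/((N:ℝ)+1))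
            = (((N:ℝ) - (N:ℝ)/((N:ℝ)+1)) ^ ((N:ℝ)-1)⁻¹ *
                (1 - (N:ℝ)/((N:ℝ)+1)) ^ (-((N:ℝ)-1)⁻¹)) *
              ((1 - (N:ℝ)/((N:ℝ)+1))⁻¹ * ((N:ℝ)/((N:ℝ)+1))) := by ring
          _ = (N:ℝ)^(2*((N:ℝ)-1)⁻¹) * (N:ℝ) := by rw [hra, he4]
      rw [t1, hra, hCc]
      have hfin : (N:ℝ)^(-2/((N:ℝ)-1)) / (N:ℝ) * ((N:ℝ)^(2*((N:ℝ)-1)⁻¹) * (N:ℝ))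
          = (N:ℝ)^(-2/((N:ℝ)-1)) * (N:ℝ)^(2*((N:ℝ)-1)⁻¹) := by
        field_simp
      rw [hfin]
      ring
    · exact ((contInt (N:ℝ) _ _ _ _ ha0 ha1 han).sub (contInt (N:ℝ) _ _ _ _ ha0 ha1 han))
  -- final assembly
  have hx1 : x < 1 := lt_of_le_of_lt hxa ha1
  have h1x : (0:ℝ) < 1 - x := by linarith
  have hnx : (0:ℝ) < (N:ℝ) - x := by linarith
  have hCc' : (N:ℝ)^(-(2:ℝ)/((N:ℝ)-1)) * (N:ℝ)^(1/((N:ℝ)-1)) = (N:ℝ)^(-(1/((N:ℝ)-1))) := by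
    rw [← Real.rpow_add hn0]
    congr 1
    field_simp
    ring
  have hU : Ustar N x = (N:ℝ)^(-(2:ℝ)/((N:ℝ)-1)) *
      (((N:ℝ) - x) ^ (1/((N:ℝ)-1)) * (1 - x) ^ (-(1/((N:ℝ)-1)))) := by
    rw [Ustar, key1 x hx0 hxa, key2, hCc']
    ring
  have hV : Vstar N = (N:ℝ)^(-(1/((N:ℝ)-1))) := key2
  have hm : ((N - 1 : ℕ) : ℝ) = (N:ℝ) - 1 := by
    rw [Nat.cast_sub (by omega)]
    norm_num
  have pw : ∀ z p : ℝ, 0 < z → (z ^ p) ^ (N - 1) = z ^ (p * ((N:ℝ) - 1)) := by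
    intro z p hz
    rw [← Real.rpow_natCast (z ^ p) (N - 1), ← Real.rpow_mul hz.le, hm]
  rw [hU, hV, mul_pow, mul_pow,
    pw ((N:ℝ)) (-(2:ℝ)/((N:ℝ)-1)) hn0, pw ((N:ℝ)-x) (1/((N:ℝ)-1)) hnx,
    pw (1-x) (-(1/((N:ℝ)-1))) h1x, pw ((N:ℝ)) (-(1/((N:ℝ)-1))) hn0,
    show (-(2:ℝ)/((N:ℝ)-1)) * ((N:ℝ)-1) = -2 from by field_simp,
    show (1/((N:ℝ)-1)) * ((N:ℝ)-1) = 1 from hc,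
    show (-(1/((N:ℝ)-1))) * ((N:ℝ)-1) = -1 from by field_simp,
    Real.rpow_one, Real.rpow_neg_one, Real.rpow_neg_one,
    show (-2:ℝ) = -(2:ℝ) from rfl, Real.rpow_neg hn0.le, Real.rpow_two]
  field_simp
  ring
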